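/- Under the stated assumptions, for any fixed lane index j ∈ {1,…,M} and any fixed neighbouring values a ∈ [0,R_{j−1}] and b ∈ [0,R_{j+1}], the single-lane update map φ(u) = u + (Δt/τ)·(S_{j−1}(a,u) − S_j(u,b)) is nondecreasing on [0,R_j] and is 1-Lipschitz there: |φ(u) − φ(u′)| ≤ |u − u′| for all u, u′ ∈ [0,R_j]. (This is the jump-contraction mechanism in the proof of Lemma 2.4, showing that the relaxation step does not increase the size of a density jump when the neighbouring lanes are continuous across the jump.) -/

import Mathlib

open Set

/-- Jump-contraction mechanism in the proof of Lemma 2.4: for fixed neighbouring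
values, the single-lane update map φ(u) = u + (Δt/τ)(S_{j-1}(a,u) - S_j(u,b)) is
nondecreasing and 1-Lipschitz on [0, R_j]. -/
theorem single_lane_update_monotone_lipschitz
    (M : ℕ) (hM : 1 ≤ M)
    (R : ℕ → ℝ) (hR : ∀ j, 1 ≤ j → j ≤ M → 0 < R j)
    (hR0 : R 0 = 0) (hRM1 : R (M+1) = 0)
    (𝒮 τ Δt : ℝ) (h𝒮 : 0 < 𝒮) (hτ : 0 < τ) (hΔt : 0 < Δt)
    (hΔtτ : Δt ≤ τ / (2 * 𝒮))
    (S : ℕ → ℝ → ℝ → ℝ)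
    (hS0 : ∀ u w, S 0 u w = 0)
    (hSM : ∀ u w, S M u w = 0)
    (hSC1 : ∀ j, 1 ≤ j → j ≤ M - 1 → ContDiff ℝ 1 (Function.uncurry (S j)))
    (hS1 : ∀ j, 1 ≤ j → j ≤ M - 1 → ∀ u ∈ Icc (0:ℝ) (R j), ∀ w ∈ Icc (0:ℝ) (R (j+1)),
      deriv (fun u' => S j u' w) u ∈ Icc (0:ℝ) 𝒮)
    (hS2 : ∀ j, 1 ≤ j → j ≤ M - 1 → ∀ u ∈ Icc (0:ℝ) (R j), ∀ w ∈ Icc (0:ℝ) (R (j+1)),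
      deriv (fun w' => S j u w') w ∈ Icc (-𝒮) (0:ℝ))
    (hS00 : ∀ j, 1 ≤ j → j ≤ M - 1 → S j 0 0 = 0)
    (hSRR : ∀ j, 1 ≤ j → j ≤ M - 1 → S j (R j) (R (j+1)) = 0)
    (j : ℕ) (hj1 : 1 ≤ j) (hjM : j ≤ M)
    (a b : ℝ) (ha : a ∈ Icc (0:ℝ) (R (j-1))) (hb : b ∈ Icc (0:ℝ) (R (j+1)))
    (φ : ℝ → ℝ)
    (hφ : ∀ u, φ u = u + (Δt / τ) * (S (j-1) a u - S j u b)) :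
    (∀ u ∈ Icc (0:ℝ) (R j), ∀ u' ∈ Icc (0:ℝ) (R j), u ≤ u' → φ u ≤ φ u') ∧
    (∀ u ∈ Icc (0:ℝ) (R j), ∀ u' ∈ Icc (0:ℝ) (R j), |φ u - φ u'| ≤ |u - u'|) := by

  set c : ℝ := Δt / τ with hc
  have hcpos : 0 < c := div_pos hΔt hτ
  have hc2S : c * (2 * 𝒮) ≤ 1 := by
    rw [hc, div_mul_eq_mul_div, div_le_one hτ]
    calc Δt * (2 * 𝒮) ≤ (τ / (2 * 𝒮)) * (2 * 𝒮) := by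
          apply mul_le_mul_of_nonneg_right hΔtτ; positivity
      _ = τ := by field_simp
  -- derivative facts for g1 = fun w => S (j-1) a w
  have hg1 : Differentiable ℝ (fun w => S (j-1) a w) ∧
      ∀ u ∈ Icc (0:ℝ) (R j), deriv (fun w => S (j-1) a w) u ∈ Icc (-𝒮) (0:ℝ) := by
    rcases eq_or_lt_of_le hj1 with h1 | h1
    · have : (fun w => S (j-1) a w) = fun _ => (0:ℝ) := by
        funext w; rw [← h1]; simp [hS0]
      rw [this]
      refine ⟨differentiable_const _, fun u _ => ?_⟩
      simp [deriv_const]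
      exact h𝒮.le
    · have hj1' : 1 ≤ j - 1 := by omega
      have hjM' : j - 1 ≤ M - 1 := by omega
      have hjj : j - 1 + 1 = j := by omega
      have hd : Differentiable ℝ (fun w => S (j-1) a w) := by
        have := (hSC1 (j-1) hj1' hjM').differentiable one_ne_zero
        have h2 : Differentiable ℝ (fun w : ℝ => (a, w)) :=
          (differentiable_const a).prodMk differentiable_id
        exact this.comp h2
      refine ⟨hd, fun u hu => ?_⟩
      have := hS2 (j-1) hj1' hjM' a ha u (by rwa [hjj])
      exact this
  have hg2 : Differentiable ℝ (fun u => S j u b) ∧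
      ∀ u ∈ Icc (0:ℝ) (R j), deriv (fun u' => S j u' b) u ∈ Icc (0:ℝ) 𝒮 := by
    rcases eq_or_lt_of_le hjM with h1 | h1
    · have : (fun u => S j u b) = fun _ => (0:ℝ) := by
        funext u; rw [h1]; simp [hSM]
      rw [this]
      refine ⟨differentiable_const _, fun u _ => ?_⟩
      simp [deriv_const]
      exact h𝒮.le
    · have hjM' : j ≤ M - 1 := by omega
      have hd : Differentiable ℝ (fun u => S j u b) := by
        have := (hSC1 j hj1 hjM').differentiable one_ne_zero
        have h2 : Differentiable ℝ (fun u : ℝ => (u, b)) :=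
          differentiable_id.prodMk (differentiable_const b)
        exact this.comp h2
      exact ⟨hd, fun u hu => hS1 j hj1 hjM' u hu b hb⟩
  obtain ⟨hd1, hb1⟩ := hg1
  obtain ⟨hd2, hb2⟩ := hg2
  have hφeq : φ = fun u => u + c * (S (j-1) a u - S j u b) := funext hφ
  have hder : ∀ u : ℝ, HasDerivAt φ
      (1 + c * (deriv (fun w => S (j-1) a w) u - deriv (fun u' => S j u' b) u)) u := by
    intro u
    rw [hφeq]
    exact (hasDerivAt_id u).add
      (((hd1 u).hasDerivAt.sub (hd2 u).hasDerivAt).const_mul c)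
  have hderiv : ∀ u : ℝ, deriv φ u =
      1 + c * (deriv (fun w => S (j-1) a w) u - deriv (fun u' => S j u' b) u) := by
    intro u; exact (hder u).deriv
  have hdφ : Differentiable ℝ φ := fun u => (hder u).differentiableAt
  have hdbound : ∀ u ∈ Icc (0:ℝ) (R j), deriv φ u ∈ Icc (0:ℝ) 1 := by
    intro u hu
    obtain ⟨hl1, hu1⟩ := hb1 u hu
    obtain ⟨hl2, hu2⟩ := hb2 u hu
    rw [hderiv u]
    constructor
    · have : -(2 * 𝒮) ≤ deriv (fun w => S (j-1) a w) u - deriv (fun u' => S j u' b) u := by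
        linarith
      nlinarith [hcpos.le]
    · have : deriv (fun w => S (j-1) a w) u - deriv (fun u' => S j u' b) u ≤ 0 := by
        linarith
      nlinarith [hcpos.le]
  have hmono : MonotoneOn φ (Icc (0:ℝ) (R j)) := by
    apply monotoneOn_of_deriv_nonneg (convex_Icc _ _) hdφ.continuous.continuousOn
      (hdφ.differentiableOn)
    intro x hx
    rw [interior_Icc] at hx
    exact (hdbound x (Ioo_subset_Icc_self hx)).1
  have hmono2 : MonotoneOn (fun u => u - φ u) (Icc (0:ℝ) (R j)) := by
    apply monotoneOn_of_deriv_nonneg (convex_Icc _ _)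
      (continuous_id.sub hdφ.continuous).continuousOn
      (differentiable_id.sub hdφ).differentiableOn
    intro x hx
    rw [interior_Icc] at hx
    have hd : HasDerivAt (fun u => u - φ u) (1 - deriv φ x) x :=
      (hasDerivAt_id x).sub (hdφ x).hasDerivAt
    show 0 ≤ deriv (fun u => u - φ u) x
    rw [hd.deriv]
    have := (hdbound x (Ioo_subset_Icc_self hx)).2
    linarith
  constructor
  · intro u hu u' hu' huu'
    exact hmono hu hu' huu'
  · intro u hu u' hu'
    rcases le_total u u' with h | h
    · have h1 := hmono hu hu' h
      have h2 := hmono2 hu hu' h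
      simp only at h2
      rw [abs_sub_comm, abs_of_nonneg (by linarith), abs_sub_comm u, abs_of_nonneg (by linarith)]
      linarith
    · have h1 := hmono hu' hu h
      have h2 := hmono2 hu' hu h
      simp only at h2
      rw [abs_of_nonneg (by linarith), abs_of_nonneg (by linarith)]
      linarith
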